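/- Let T and T′ be standard Young tableaux (of arbitrary shapes) with N and N′ boxes respectively. Then the shuffle T′ ↦_N T (shuffle at i = N) is a standard Young tableau and its arc set equals arcs(T) ∪ { (a + N, b + N) : (a,b) ∈ arcs(T′) }. -/

import Mathlib

open scoped Classical

noncomputable def nthSmallest (s : Finset ℕ) (j : ℕ) : ℕ := (s.sort (· ≤ ·)).getD j 0

lemma sort_union {A B : Finset ℕ} (h : ∀ a ∈ A, ∀ b ∈ B, a < b) :
    (A ∪ B).sort (· ≤ ·) = A.sort (· ≤ ·) ++ B.sort (· ≤ ·) := by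
  have hd : Disjoint A B := by
    rw [Finset.disjoint_left]; intro a ha hb; exact lt_irrefl a (h a ha a hb)
  have hperm : ((A ∪ B).sort (· ≤ ·)).Perm (A.sort (· ≤ ·) ++ B.sort (· ≤ ·)) := by
    rw [← Multiset.coe_eq_coe]
    have h1 : ((A ∪ B).sort (· ≤ ·) : Multiset ℕ) = (A ∪ B).val := Finset.sort_eq _ _
    have h2 : ((A.sort (· ≤ ·) ++ B.sort (· ≤ ·) : List ℕ) : Multiset ℕ)
        = A.val + B.val := by
      rw [← Multiset.coe_add, Finset.sort_eq, Finset.sort_eq]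
    rw [h1, h2, ← Finset.disjUnion_eq_union _ _ hd]
    rfl
  have hsorted : List.Pairwise (· ≤ ·) (A.sort (· ≤ ·) ++ B.sort (· ≤ ·)) := by
    refine List.pairwise_append.mpr ⟨Finset.pairwise_sort _ _, Finset.pairwise_sort _ _, ?_⟩
    intro a ha b hb
    exact le_of_lt (h a ((Finset.mem_sort _).1 ha) b ((Finset.mem_sort _).1 hb))
  exact List.Perm.eq_of_pairwise' (Finset.pairwise_sort _ _) hsorted hperm

lemma sort_image_add (A : Finset ℕ) (N : ℕ) :
    (A.image (· + N)).sort (· ≤ ·) = (A.sort (· ≤ ·)).map (· + N) := by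
  have hperm : ((A.image (· + N)).sort (· ≤ ·)).Perm ((A.sort (· ≤ ·)).map (· + N)) := by
    rw [← Multiset.coe_eq_coe, Finset.sort_eq, ← Multiset.map_coe, Finset.sort_eq]
    rw [Finset.image_val_of_injOn]
    exact fun a _ b _ hab => by omega
  have hsorted : List.Pairwise (· ≤ ·) ((A.sort (· ≤ ·)).map (· + N)) :=
    List.pairwise_map.mpr ((Finset.pairwise_sort _ _).imp (fun hab => by omega))
  exact List.Perm.eq_of_pairwise' (Finset.pairwise_sort _ _) hsorted hperm

lemma length_sort' (A : Finset ℕ) : (A.sort (· ≤ ·)).length = A.card :=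
  Finset.length_sort _

lemma nthSmallest_eq_getElem (s : Finset ℕ) {j : ℕ} (h : j < s.card) :
    nthSmallest s j = (s.sort (· ≤ ·))[j]'(by rwa [length_sort']) := by
  rw [nthSmallest, List.getD_eq_getElem]

lemma nthSmallest_mem (s : Finset ℕ) {j : ℕ} (h : j < s.card) : nthSmallest s j ∈ s := by
  rw [nthSmallest_eq_getElem s h]
  exact (Finset.mem_sort _).1 (List.getElem_mem _)

lemma nthSmallest_lt_nthSmallest (s : Finset ℕ) {i j : ℕ} (hij : i < j) (hj : j < s.card) :
    nthSmallest s i < nthSmallest s j := by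
  rw [nthSmallest_eq_getElem s (hij.trans hj), nthSmallest_eq_getElem s hj]
  exact List.pairwise_iff_getElem.mp (Finset.sortedLT_sort s).pairwise _ _ _ _ hij

lemma nthSmallest_le_nthSmallest (s : Finset ℕ) {i j : ℕ} (hij : i ≤ j) (hj : j < s.card) :
    nthSmallest s i ≤ nthSmallest s j := by
  rcases eq_or_lt_of_le hij with rfl | hlt
  · exact le_rfl
  · exact le_of_lt (nthSmallest_lt_nthSmallest s hlt hj)

lemma nthSmallest_union {A B : Finset ℕ} (h : ∀ a ∈ A, ∀ b ∈ B, a < b) (j : ℕ) :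
    nthSmallest (A ∪ B) j
      = if j < A.card then nthSmallest A j else nthSmallest B (j - A.card) := by
  simp only [nthSmallest, sort_union h]
  rcases lt_or_ge j A.card with hc | hc
  · rw [if_pos hc, List.getD_append _ _ _ _ (by rwa [length_sort'])]
  · rw [if_neg (not_lt.2 hc), List.getD_append_right _ _ _ _ (by rwa [length_sort']),
      length_sort']

lemma nthSmallest_image_add (A : Finset ℕ) (N : ℕ) {j : ℕ} (hj : j < A.card) :
    nthSmallest (A.image (· + N)) j = nthSmallest A j + N := by
  rw [nthSmallest, sort_image_add, List.getD_eq_getElem _ _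
      (by rw [List.length_map, length_sort']; exact hj), List.getElem_map,
    nthSmallest_eq_getElem _ hj]

def TableauCond (R S : Finset ℕ) : Prop :=
  S.card ≤ R.card ∧ ∀ j < S.card, nthSmallest R j < nthSmallest S j

lemma all_lt_image_add {A B : Finset ℕ} {N : ℕ} (hA : A ⊆ Finset.Icc 1 N)
    (hB : ∀ x ∈ B, 1 ≤ x) : ∀ a ∈ A, ∀ b ∈ B.image (· + N), a < b := by
  intro a ha b hb
  obtain ⟨y, hy, rfl⟩ := Finset.mem_image.1 hb
  have := Finset.mem_Icc.1 (hA ha)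
  have := hB y hy
  omega

lemma card_union_shift {A B : Finset ℕ} {N : ℕ} (hA : A ⊆ Finset.Icc 1 N)
    (hB : ∀ x ∈ B, 1 ≤ x) :
    (A ∪ B.image (· + N)).card = A.card + B.card := by
  rw [Finset.card_union_of_disjoint, Finset.card_image_of_injective _ (fun a b hab => by omega)]
  rw [Finset.disjoint_left]
  intro a ha hb
  exact lt_irrefl a (all_lt_image_add hA hB a ha a hb)

lemma tableauCond_union {R S R' S' : Finset ℕ} {N : ℕ}
    (hR : R ⊆ Finset.Icc 1 N) (hS : S ⊆ Finset.Icc 1 N)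
    (hR' : ∀ x ∈ R', 1 ≤ x) (hS' : ∀ x ∈ S', 1 ≤ x)
    (h : TableauCond R S) (h' : TableauCond R' S') :
    TableauCond (R ∪ R'.image (· + N)) (S ∪ S'.image (· + N)) := by
  have hcR := card_union_shift hR hR'
  have hcS := card_union_shift hS hS'
  constructor
  · rw [hcR, hcS]; exact Nat.add_le_add h.1 h'.1
  · intro j hj
    rw [hcS] at hj
    rw [nthSmallest_union (all_lt_image_add hR hR'),
      nthSmallest_union (all_lt_image_add hS hS')]
    rcases lt_or_ge j S.card with hjS | hjS
    · rw [if_pos hjS, if_pos (lt_of_lt_of_le hjS h.1)]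
      exact h.2 j hjS
    · rw [if_neg (not_lt.2 hjS)]
      have hj' : j - S.card < S'.card := by omega
      rw [nthSmallest_image_add _ _ hj']
      have h1S' : 1 ≤ nthSmallest S' (j - S.card) := hS' _ (nthSmallest_mem _ hj')
      rcases lt_or_ge j R.card with hjR | hjR
      · rw [if_pos hjR]
        have : nthSmallest R j ∈ Finset.Icc 1 N := hR (nthSmallest_mem _ hjR)
        rw [Finset.mem_Icc] at this
        omega
      · rw [if_neg (not_lt.2 hjR)]
        have hcard := h.1
        have hjR' : j - R.card < S'.card := by omega
        rw [nthSmallest_image_add _ _ (lt_of_lt_of_le hjR' h'.1)]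
        have h1 : nthSmallest R' (j - R.card) < nthSmallest S' (j - R.card) := h'.2 _ hjR'
        have h2 : nthSmallest S' (j - R.card) ≤ nthSmallest S' (j - S.card) :=
          nthSmallest_le_nthSmallest _ (by omega) hj'
        omega

/-- For `i ∈ S`, `i` is the `k`-th smallest where `k` is the number of smaller elements. -/
lemma exists_idx {S : Finset ℕ} {i : ℕ} (hi : i ∈ S) :
    ∃ k < S.card, nthSmallest S k = i ∧ (S.filter (· < i)).card = k := by
  have hmem : i ∈ S.sort (· ≤ ·) := (Finset.mem_sort _).2 hi
  obtain ⟨k, hk, hik⟩ := List.getElem_of_mem hmem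
  rw [length_sort'] at hk
  refine ⟨k, hk, by rw [nthSmallest_eq_getElem _ hk]; exact hik, ?_⟩
  have hset : S.filter (· < i) = (Finset.range k).image (nthSmallest S) := by
    ext x
    simp only [Finset.mem_filter, Finset.mem_image, Finset.mem_range]
    constructor
    · rintro ⟨hxS, hxi⟩
      obtain ⟨t, ht, hxt⟩ := List.getElem_of_mem ((Finset.mem_sort (α := ℕ) (· ≤ ·)).2 hxS)
      rw [length_sort'] at ht
      refine ⟨t, ?_, by rw [nthSmallest_eq_getElem _ ht]; exact hxt⟩
      by_contra hle
      have : nthSmallest S k ≤ nthSmallest S t :=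
        nthSmallest_le_nthSmallest _ (by omega) ht
      rw [nthSmallest_eq_getElem _ ht, nthSmallest_eq_getElem _ hk] at this
      omega
    · rintro ⟨t, htk, rfl⟩
      refine ⟨nthSmallest_mem _ (htk.trans hk), ?_⟩
      have := nthSmallest_lt_nthSmallest S htk hk
      rw [nthSmallest_eq_getElem _ hk, hik] at this
      exact this
  rw [hset, Finset.card_image_of_injOn, Finset.card_range]
  intro a ha b hb hab
  simp only [Finset.coe_range, Set.mem_Iio] at ha hb
  by_contra hne
  rcases Nat.lt_or_ge a b with hlt | hge
  · exact absurd hab (ne_of_lt (nthSmallest_lt_nthSmallest _ hlt (hb.trans hk)))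
  · have : b < a := by omega
    exact absurd hab.symm (ne_of_lt (nthSmallest_lt_nthSmallest _ this (ha.trans hk)))

noncomputable def greedy (R S : Finset ℕ) (i : ℕ) : ℕ :=
  Nat.strongRecOn i fun i ih =>
    WithBot.unbotD 0 ((R.filter fun j => j < i ∧ ∀ i' (_ : i' ∈ S) (h : i' < i), j ≠ ih i' h).max)

lemma greedy_def (R S : Finset ℕ) (i : ℕ) :
    greedy R S i =
      WithBot.unbotD 0 ((R.filter fun j => j < i ∧ ∀ i' ∈ S, i' < i → j ≠ greedy R S i').max) := by
  show Nat.lt_wfRel.wf.fix _ i = _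
  rw [WellFounded.fix_eq]
  rfl

lemma max_unbot'_spec (s : Finset ℕ) (hs : s.Nonempty) :
    WithBot.unbotD 0 (s.max) ∈ s ∧ ∀ b ∈ s, b ≤ WithBot.unbotD 0 (s.max) := by
  rw [← Finset.coe_max' hs, WithBot.unbotD_coe]
  exact ⟨s.max'_mem hs, fun b hb => Finset.le_max' s b hb⟩

lemma max_unbot'_eq (s : Finset ℕ) {m : ℕ} (hm : m ∈ s) (hmax : ∀ b ∈ s, b ≤ m) :
    WithBot.unbotD 0 (s.max) = m := by
  have hs : s.Nonempty := ⟨m, hm⟩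
  rw [← Finset.coe_max' hs, WithBot.unbotD_coe]
  exact le_antisymm (Finset.max'_le _ _ _ hmax) (Finset.le_max' _ _ hm)

lemma greedy_eq_zero_or_mem (R S : Finset ℕ) (i : ℕ) :
    greedy R S i = 0 ∨ greedy R S i ∈ R := by
  rw [greedy_def]
  rcases hm : (R.filter fun j => j < i ∧ ∀ i' ∈ S, i' < i → j ≠ greedy R S i').max with _ | a
  · left; rfl
  · right
    exact Finset.filter_subset _ _ (Finset.mem_of_max hm)

lemma greedy_le {R S : Finset ℕ} {N : ℕ} (hR : R ⊆ Finset.Icc 1 N) (i : ℕ) :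
    greedy R S i ≤ N := by
  rcases greedy_eq_zero_or_mem R S i with h | h
  · omega
  · exact (Finset.mem_Icc.1 (hR h)).2

lemma greedy_filter_nonempty {R S : Finset ℕ} (h : TableauCond R S) {i : ℕ} (hi : i ∈ S) :
    (R.filter fun j => j < i ∧ ∀ i' ∈ S, i' < i → j ≠ greedy R S i').Nonempty := by
  obtain ⟨k, hkcard, hnth, hfc⟩ := exists_idx hi
  set U := (S.filter (· < i)).image (greedy R S) with hU
  have hUcard : U.card ≤ k := le_trans Finset.card_image_le (le_of_eq hfc)
  have hA1 : (Finset.range (k + 1)).image (nthSmallest R) ⊆ R.filter (· < i) := by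
    intro x hx
    simp only [Finset.mem_image, Finset.mem_range] at hx
    obtain ⟨t, htk, rfl⟩ := hx
    have hkR : k < R.card := lt_of_lt_of_le hkcard h.1
    have htR : t < R.card := by omega
    refine Finset.mem_filter.2 ⟨nthSmallest_mem _ htR, ?_⟩
    calc nthSmallest R t ≤ nthSmallest R k := nthSmallest_le_nthSmallest _ (by omega) hkR
    _ < nthSmallest S k := h.2 k hkcard
    _ = i := hnth
  have hA1card : k + 1 ≤ (R.filter (· < i)).card := by
    have hinj : Set.InjOn (nthSmallest R) (Finset.range (k + 1)) := by
      intro a ha b hb hab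
      simp only [Finset.coe_range, Set.mem_Iio] at ha hb
      have hkR : k < R.card := lt_of_lt_of_le hkcard h.1
      by_contra hne
      rcases Nat.lt_or_ge a b with hlt | hge
      · exact absurd hab (ne_of_lt (nthSmallest_lt_nthSmallest _ hlt (by omega)))
      · have hba : b < a := by omega
        exact absurd hab.symm (ne_of_lt (nthSmallest_lt_nthSmallest _ hba (by omega)))
    calc k + 1 = ((Finset.range (k + 1)).image (nthSmallest R)).card := by
          rw [Finset.card_image_of_injOn hinj, Finset.card_range]
    _ ≤ (R.filter (· < i)).card := Finset.card_le_card hA1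
  have hsub : (R.filter (· < i)) \ U ⊆
      R.filter fun j => j < i ∧ ∀ i' ∈ S, i' < i → j ≠ greedy R S i' := by
    intro j hj
    rw [Finset.mem_sdiff, Finset.mem_filter] at hj
    refine Finset.mem_filter.2 ⟨hj.1.1, hj.1.2, ?_⟩
    intro i' hi' hlt hje
    exact hj.2 (Finset.mem_image.2 ⟨i', Finset.mem_filter.2 ⟨hi', hlt⟩, hje.symm⟩)
  have hpos : 0 < ((R.filter (· < i)) \ U).card := by
    have := Finset.le_card_sdiff U (R.filter (· < i))
    omega
  rw [← Finset.card_pos]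
  exact lt_of_lt_of_le hpos (Finset.card_le_card hsub)

lemma greedy_spec {R S : Finset ℕ} (h : TableauCond R S) {i : ℕ} (hi : i ∈ S) :
    greedy R S i ∈ (R.filter fun j => j < i ∧ ∀ i' ∈ S, i' < i → j ≠ greedy R S i') ∧
    ∀ b ∈ (R.filter fun j => j < i ∧ ∀ i' ∈ S, i' < i → j ≠ greedy R S i'),
      b ≤ greedy R S i := by
  rw [greedy_def]
  exact max_unbot'_spec _ (greedy_filter_nonempty h hi)

lemma greedy_shuffle {N : ℕ} {R S R' S' : Finset ℕ}
    (hR : R ⊆ Finset.Icc 1 N) (hS : S ⊆ Finset.Icc 1 N)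
    (hR' : ∀ x ∈ R', 1 ≤ x) (hS' : ∀ x ∈ S', 1 ≤ x)
    (h' : TableauCond R' S') (i : ℕ) :
    (i ≤ N → greedy (R ∪ R'.image (· + N)) (S ∪ S'.image (· + N)) i = greedy R S i) ∧
    (∀ x ∈ S', i = x + N →
      greedy (R ∪ R'.image (· + N)) (S ∪ S'.image (· + N)) i = greedy R' S' x + N) := by
  induction i using Nat.strongRecOn with
  | _ i IH =>
  constructor
  · -- part 1 : i ≤ N
    intro hiN
    have hfil : ((R ∪ R'.image (· + N)).filter fun j => j < i ∧
          ∀ i' ∈ (S ∪ S'.image (· + N)), i' < i →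
            j ≠ greedy (R ∪ R'.image (· + N)) (S ∪ S'.image (· + N)) i')
        = R.filter fun j => j < i ∧ ∀ i' ∈ S, i' < i → j ≠ greedy R S i' := by
      ext j
      simp only [Finset.mem_filter, Finset.mem_union]
      constructor
      · rintro ⟨hjA, hji, hcond⟩
        rcases hjA with hjR | hjim
        · refine ⟨hjR, hji, ?_⟩
          intro i' hi' hlt
          have := hcond i' (Or.inl hi') hlt
          rwa [(IH i' hlt).1 (by omega)] at this
        · obtain ⟨y, hy, rfl⟩ := Finset.mem_image.1 hjim
          have := hR' y hy
          omega
      · rintro ⟨hjR, hji, hcond⟩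
        refine ⟨Or.inl hjR, hji, ?_⟩
        intro i' hi' hlt
        rcases hi' with hi'S | hi'im
        · rw [(IH i' hlt).1 (by omega)]
          exact hcond i' hi'S hlt
        · obtain ⟨y, hy, rfl⟩ := Finset.mem_image.1 hi'im
          have := hS' y hy
          omega
    rw [greedy_def, hfil, ← greedy_def]
  · -- part 2 : i = x + N with x ∈ S'
    rintro x hx rfl
    have hgx := greedy_spec h' hx
    have hgxR' : greedy R' S' x ∈ R' := (Finset.mem_filter.1 hgx.1).1
    have hgx1 : 1 ≤ greedy R' S' x := hR' _ hgxR'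
    have hx1 : 1 ≤ x := hS' x hx
    have hfil : ((R ∪ R'.image (· + N)).filter fun j => j < x + N ∧
          ∀ i' ∈ (S ∪ S'.image (· + N)), i' < x + N →
            j ≠ greedy (R ∪ R'.image (· + N)) (S ∪ S'.image (· + N)) i')
        = (R.filter fun j => j < x + N ∧
          ∀ i' ∈ (S ∪ S'.image (· + N)), i' < x + N →
            j ≠ greedy (R ∪ R'.image (· + N)) (S ∪ S'.image (· + N)) i') ∪
          ((R'.filter fun j => j < x ∧ ∀ x' ∈ S', x' < x → j ≠ greedy R' S' x').image
            (· + N)) := by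
      rw [Finset.filter_union]
      congr 1
      ext j
      simp only [Finset.mem_filter, Finset.mem_image]
      constructor
      · rintro ⟨⟨y, hy, rfl⟩, hji, hcond⟩
        refine ⟨y, ⟨hy, by omega, ?_⟩, rfl⟩
        intro x' hx' hx'x
        have hmem : x' + N ∈ S ∪ S'.image (· + N) :=
          Finset.mem_union_right _ (Finset.mem_image.2 ⟨x', hx', rfl⟩)
        have := hcond (x' + N) hmem (by omega)
        rw [(IH (x' + N) (by omega)).2 x' hx' rfl] at this
        omega
      · rintro ⟨y, hy, rfl⟩
        have hy1 : 1 ≤ y := hR' y hy.1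
        refine ⟨⟨y, hy.1, rfl⟩, by omega, ?_⟩
        intro i' hi' hlt
        rcases Finset.mem_union.1 hi' with hi'S | hi'im
        · have hi'N : i' ≤ N := (Finset.mem_Icc.1 (hS hi'S)).2
          rw [(IH i' hlt).1 hi'N]
          have := greedy_le (S := S) hR i'
          omega
        · obtain ⟨x', hx', rfl⟩ := Finset.mem_image.1 hi'im
          rw [(IH (x' + N) hlt).2 x' hx' rfl]
          have := hy.2.2 x' hx' (by omega)
          omega
    rw [greedy_def, hfil]
    apply max_unbot'_eq
    · exact Finset.mem_union_right _ (Finset.mem_image.2 ⟨greedy R' S' x, hgx.1, rfl⟩)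
    · intro b hb
      rcases Finset.mem_union.1 hb with hbR | hbim
      · have : b ≤ N := (Finset.mem_Icc.1 (hR (Finset.mem_filter.1 hbR).1)).2
        omega
      · obtain ⟨c, hc, rfl⟩ := Finset.mem_image.1 hbim
        have := hgx.2 c hc
        omega

noncomputable def arcsOf (R S : Finset ℕ) : Finset (ℕ × ℕ) :=
  S.image fun i => (greedy R S i, i)

lemma arcsOf_shuffle {N : ℕ} {R S R' S' : Finset ℕ}
    (hR : R ⊆ Finset.Icc 1 N) (hS : S ⊆ Finset.Icc 1 N)
    (hR' : ∀ x ∈ R', 1 ≤ x) (hS' : ∀ x ∈ S', 1 ≤ x)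
    (h' : TableauCond R' S') :
    arcsOf (R ∪ R'.image (· + N)) (S ∪ S'.image (· + N))
      = arcsOf R S ∪ (arcsOf R' S').image (fun a => (a.1 + N, a.2 + N)) := by
  unfold arcsOf
  rw [Finset.image_union, Finset.image_image, Finset.image_image]
  congr 1
  · apply Finset.image_congr
    intro i hi
    dsimp only
    rw [(greedy_shuffle hR hS hR' hS' h' i).1 (Finset.mem_Icc.1 (hS hi)).2]
  · apply Finset.image_congr
    intro x hx
    simp only [Function.comp_apply]
    rw [(greedy_shuffle hR hS hR' hS' h' (x + N)).2 x hx rfl]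

/-! ### List-level lemmas -/

lemma mem_foldr_union (L : List (Finset ℕ)) (x : ℕ) :
    x ∈ L.foldr (· ∪ ·) ∅ ↔ ∃ s ∈ L, x ∈ s := by
  induction L with
  | nil => simp
  | cons a L ih => simp [ih]

lemma row_subset_foldr {L : List (Finset ℕ)} {row : Finset ℕ} (h : row ∈ L) :
    row ⊆ L.foldr (· ∪ ·) ∅ :=
  fun x hx => (mem_foldr_union L x).2 ⟨row, h, hx⟩

lemma tableauCond_empty (R : Finset ℕ) : TableauCond R ∅ := by
  refine ⟨by simp, ?_⟩
  intro j hj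
  simp at hj

lemma tcond_getD {L : List (Finset ℕ)} (h : L.Chain' TableauCond) (s : ℕ) :
    TableauCond (L.getD s ∅) (L.getD (s + 1) ∅) := by
  rcases lt_or_ge (s + 1) L.length with hlt | hle
  · rw [List.getD_eq_getElem _ _ (by omega), List.getD_eq_getElem _ _ hlt]
    have := List.isChain_iff_getElem.1 h s (by omega)
    simpa using this
  · rw [List.getD_eq_default _ _ hle]
    exact tableauCond_empty _

def IsSYT (N : ℕ) (L : List (Finset ℕ)) : Prop :=
  (∀ s ∈ L, s.Nonempty) ∧
  L.Pairwise Disjoint ∧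
  L.foldr (· ∪ ·) ∅ = Finset.Icc 1 N ∧
  (L.map Finset.card).Chain' (fun c c' => c' ≤ c) ∧
  L.Chain' TableauCond

noncomputable def arcsSYT (L : List (Finset ℕ)) : Finset (ℕ × ℕ) :=
  (L.zip L.tail).foldr (fun p acc => arcsOf p.1 p.2 ∪ acc) ∅

noncomputable def shuffleRows (L L' : List (Finset ℕ)) (i N' : ℕ) : List (Finset ℕ) :=
  (List.range (max L.length L'.length)).map fun s =>
    ((L.getD s ∅).image fun x => if x ≤ i then x else x + N') ∪
    ((L'.getD s ∅).image fun x => x + i)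

lemma arcsOf_empty (R : Finset ℕ) : arcsOf R ∅ = ∅ := by
  simp [arcsOf]

lemma biUnion_range_succ (n : ℕ) (g : ℕ → Finset (ℕ × ℕ)) :
    (Finset.range (n + 1)).biUnion g = g 0 ∪ (Finset.range n).biUnion (fun s => g (s + 1)) := by
  ext x
  simp only [Finset.mem_biUnion, Finset.mem_range, Finset.mem_union]
  constructor
  · rintro ⟨s, hs, hx⟩
    cases s with
    | zero => exact Or.inl hx
    | succ t => exact Or.inr ⟨t, by omega, hx⟩
  · rintro (hx | ⟨t, ht, hx⟩)
    · exact ⟨0, by omega, hx⟩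
    · exact ⟨t + 1, by omega, hx⟩

lemma arcsSYT_eq_biUnion : ∀ (L : List (Finset ℕ)) (n : ℕ), L.length ≤ n + 1 →
    arcsSYT L = (Finset.range n).biUnion
      (fun s => arcsOf (L.getD s ∅) (L.getD (s + 1) ∅)) := by
  intro L
  induction L with
  | nil =>
    intro n _
    ext x
    simp [arcsSYT, arcsOf_empty]
  | cons a L ih =>
    intro n hn
    cases L with
    | nil =>
      have h1 : arcsSYT [a] = ∅ := by simp [arcsSYT]
      rw [h1]
      ext x
      have : ∀ s : ℕ, ([a] : List (Finset ℕ)).getD (s + 1) ∅ = ∅ := fun s =>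
        List.getD_eq_default _ _ (by simp)
      simp [this, arcsOf_empty]
    | cons b L' =>
      obtain ⟨m, rfl⟩ : ∃ m, n = m + 1 := ⟨n - 1, by simp at hn; omega⟩
      have hstep : arcsSYT (a :: b :: L') = arcsOf a b ∪ arcsSYT (b :: L') := by
        simp [arcsSYT, List.zip]
      rw [hstep, ih m (by simp at hn ⊢; omega), biUnion_range_succ]
      congr 1

lemma disjoint_getD {L : List (Finset ℕ)} (h : L.Pairwise Disjoint) {i j : ℕ}
    (hij : i ≠ j) : Disjoint (L.getD i ∅) (L.getD j ∅) := by
  rcases lt_or_ge i L.length with hi | hi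
  · rcases lt_or_ge j L.length with hj | hj
    · rw [List.getD_eq_getElem _ _ hi, List.getD_eq_getElem _ _ hj]
      rcases Nat.lt_or_ge i j with hlt | hge
      · exact List.pairwise_iff_getElem.1 h i j hi hj hlt
      · exact (List.pairwise_iff_getElem.1 h j i hj hi (by omega)).symm
    · rw [List.getD_eq_default _ _ hj]; exact Finset.disjoint_empty_right _
  · rw [List.getD_eq_default _ _ hi]; exact Finset.disjoint_empty_left _

lemma shuffle_getD {N N' : ℕ} {L L' : List (Finset ℕ)}
    (hLsub : ∀ s, L.getD s ∅ ⊆ Finset.Icc 1 N) (s : ℕ) :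
    (shuffleRows L L' N N').getD s ∅
      = (L.getD s ∅) ∪ (L'.getD s ∅).image (· + N) := by
  have him : ((L.getD s ∅).image fun x => if x ≤ N then x else x + N') = L.getD s ∅ := by
    have hcong : ∀ x ∈ L.getD s ∅, (if x ≤ N then x else x + N') = id x := by
      intro x hx
      have := Finset.mem_Icc.1 (hLsub s hx)
      simp [this.2]
    rw [Finset.image_congr hcong, Finset.image_id]
  rcases lt_or_ge s (max L.length L'.length) with hs | hs
  · rw [shuffleRows, List.getD_eq_getElem _ _ (by simpa using hs)]
    simp only [List.getElem_map, List.getElem_range]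
    rw [him]
  · have h1 : L.getD s ∅ = ∅ := List.getD_eq_default _ _ (by omega)
    have h2 : L'.getD s ∅ = ∅ := List.getD_eq_default _ _ (by omega)
    have h3 : (shuffleRows L L' N N').getD s ∅ = ∅ :=
      List.getD_eq_default _ _ (by simpa [shuffleRows] using hs)
    rw [h1, h2, h3]
    simp

/-- The shuffle of `T'` into `T` at `i = N` is a standard Young tableau, and its arc set is
`arcs(T) ∪ {(a + N, b + N) : (a,b) ∈ arcs(T')}`. -/
theorem shuffle_at_N_is_SYT_and_arcs (N N' : ℕ) (L L' : List (Finset ℕ))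
    (hT : IsSYT N L) (hT' : IsSYT N' L') :
    IsSYT (N + N') (shuffleRows L L' N N') ∧
    arcsSYT (shuffleRows L L' N N') =
      arcsSYT L ∪ (arcsSYT L').image (fun a => (a.1 + N, a.2 + N)) := by
  obtain ⟨hne, hdisj, hpart, hcards, hchain⟩ := hT
  obtain ⟨hne', hdisj', hpart', hcards', hchain'⟩ := hT'
  set Z := shuffleRows L L' N N' with hZdef
  set M := max L.length L'.length with hM
  have hLsub : ∀ s, L.getD s ∅ ⊆ Finset.Icc 1 N := by
    intro s
    rcases lt_or_ge s L.length with h | h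
    · rw [List.getD_eq_getElem _ _ h, ← hpart]
      exact row_subset_foldr (List.getElem_mem _)
    · rw [List.getD_eq_default _ _ h]; exact Finset.empty_subset _
  have hL'sub : ∀ s, L'.getD s ∅ ⊆ Finset.Icc 1 N' := by
    intro s
    rcases lt_or_ge s L'.length with h | h
    · rw [List.getD_eq_getElem _ _ h, ← hpart']
      exact row_subset_foldr (List.getElem_mem _)
    · rw [List.getD_eq_default _ _ h]; exact Finset.empty_subset _
  have hL'1 : ∀ s, ∀ x ∈ L'.getD s ∅, 1 ≤ x := by
    intro s x hx
    exact (Finset.mem_Icc.1 (hL'sub s hx)).1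
  have hZ : ∀ s, Z.getD s ∅ = (L.getD s ∅) ∪ (L'.getD s ∅).image (· + N) :=
    shuffle_getD hLsub
  have hZlen : Z.length = M := by simp [hZdef, shuffleRows, hM]
  have htcL : ∀ s, TableauCond (L.getD s ∅) (L.getD (s + 1) ∅) := tcond_getD hchain
  have htcL' : ∀ s, TableauCond (L'.getD s ∅) (L'.getD (s + 1) ∅) := tcond_getD hchain'
  have htcZrow : ∀ s, TableauCond (Z.getD s ∅) (Z.getD (s + 1) ∅) := by
    intro s
    rw [hZ s, hZ (s + 1)]
    exact tableauCond_union (hLsub s) (hLsub (s + 1)) (hL'1 s) (hL'1 (s + 1))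
      (htcL s) (htcL' s)
  have hZgetElem : ∀ (i : ℕ) (h : i < Z.length),
      Z[i] = (L.getD i ∅) ∪ (L'.getD i ∅).image (· + N) := by
    intro i h
    rw [← List.getD_eq_getElem _ ∅ h, hZ i]
  refine ⟨⟨?_, ?_, ?_, ?_, ?_⟩, ?_⟩
  · -- nonempty rows
    intro row hrow
    obtain ⟨i, hi, rfl⟩ := List.mem_iff_getElem.1 hrow
    rw [hZgetElem i hi]
    rw [hZlen] at hi
    rcases lt_or_ge i L.length with h | h
    · have : (L.getD i ∅).Nonempty := by
        rw [List.getD_eq_getElem _ _ h]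
        exact hne _ (List.getElem_mem _)
      exact this.mono Finset.subset_union_left
    · have hi' : i < L'.length := by omega
      have : (L'.getD i ∅).Nonempty := by
        rw [List.getD_eq_getElem _ _ hi']
        exact hne' _ (List.getElem_mem _)
      exact (this.image _).mono Finset.subset_union_right
  · -- pairwise disjoint
    rw [List.pairwise_iff_getElem]
    intro i j hi hj hij
    rw [hZgetElem i hi, hZgetElem j hj]
    have hd1 : Disjoint (L.getD i ∅) (L.getD j ∅) := disjoint_getD hdisj (by omega)
    have hd2 : Disjoint (L'.getD i ∅) (L'.getD j ∅) := disjoint_getD hdisj' (by omega)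
    have hcross : ∀ a b : ℕ, Disjoint (L.getD a ∅) ((L'.getD b ∅).image (· + N)) := by
      intro a b
      rw [Finset.disjoint_left]
      intro x hx hx'
      obtain ⟨y, hy, rfl⟩ := Finset.mem_image.1 hx'
      have h1 := Finset.mem_Icc.1 (hLsub a hx)
      have h2 := hL'1 b y hy
      omega
    rw [Finset.disjoint_union_left]
    constructor
    · rw [Finset.disjoint_union_right]
      exact ⟨hd1, hcross i j⟩
    · rw [Finset.disjoint_union_right]
      refine ⟨(hcross j i).symm, ?_⟩
      rwa [Finset.disjoint_image (fun a b hab => by omega)]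
  · -- partition
    ext x
    rw [mem_foldr_union]
    constructor
    · rintro ⟨row, hrow, hx⟩
      obtain ⟨i, hi, rfl⟩ := List.mem_iff_getElem.1 hrow
      rw [hZgetElem i hi] at hx
      rcases Finset.mem_union.1 hx with h | h
      · have := Finset.mem_Icc.1 (hLsub i h)
        rw [Finset.mem_Icc]; omega
      · obtain ⟨y, hy, rfl⟩ := Finset.mem_image.1 h
        have := Finset.mem_Icc.1 (hL'sub i hy)
        rw [Finset.mem_Icc]; omega
    · intro hx
      rw [Finset.mem_Icc] at hx
      rcases le_or_gt x N with hxN | hxN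
      · have : x ∈ L.foldr (· ∪ ·) ∅ := by rw [hpart, Finset.mem_Icc]; omega
        obtain ⟨row, hrow, hxrow⟩ := (mem_foldr_union _ _).1 this
        obtain ⟨i, hi, rfl⟩ := List.mem_iff_getElem.1 hrow
        have hiZ : i < Z.length := by rw [hZlen]; omega
        refine ⟨Z[i], List.getElem_mem _, ?_⟩
        rw [hZgetElem i hiZ]
        apply Finset.mem_union_left
        rw [List.getD_eq_getElem _ _ hi]
        exact hxrow
      · have : x - N ∈ L'.foldr (· ∪ ·) ∅ := by rw [hpart', Finset.mem_Icc]; omega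
        obtain ⟨row, hrow, hxrow⟩ := (mem_foldr_union _ _).1 this
        obtain ⟨i, hi, rfl⟩ := List.mem_iff_getElem.1 hrow
        have hiZ : i < Z.length := by rw [hZlen]; omega
        refine ⟨Z[i], List.getElem_mem _, ?_⟩
        rw [hZgetElem i hiZ]
        apply Finset.mem_union_right
        refine Finset.mem_image.2 ⟨x - N, ?_, by omega⟩
        rw [List.getD_eq_getElem _ _ hi]
        exact hxrow
  · -- cards chain
    apply List.isChain_iff_getElem.2
    intro i hi
    simp only [List.length_map] at hi
    simp only [List.get_eq_getElem, List.getElem_map]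
    rw [hZgetElem i (by omega), hZgetElem (i + 1) (by omega), ← hZ i, ← hZ (i + 1)]
    exact (htcZrow i).1
  · -- TableauCond chain
    apply List.isChain_iff_getElem.2
    intro i hi
    rw [hZgetElem i (by omega), hZgetElem (i + 1) (by omega), ← hZ i, ← hZ (i + 1)]
    exact htcZrow i
  · -- arcs
    have hterm : ∀ s, arcsOf (Z.getD s ∅) (Z.getD (s + 1) ∅)
        = arcsOf (L.getD s ∅) (L.getD (s + 1) ∅) ∪
          (arcsOf (L'.getD s ∅) (L'.getD (s + 1) ∅)).image
            (fun a => (a.1 + N, a.2 + N)) := by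
      intro s
      rw [hZ s, hZ (s + 1)]
      exact arcsOf_shuffle (hLsub s) (hLsub (s + 1)) (hL'1 s) (hL'1 (s + 1)) (htcL' s)
    rw [arcsSYT_eq_biUnion Z M (by omega), arcsSYT_eq_biUnion L M (by omega),
      arcsSYT_eq_biUnion L' M (by omega)]
    ext p
    simp only [Finset.mem_biUnion, Finset.mem_range, hterm, Finset.mem_union,
      Finset.mem_image]
    constructor
    · rintro ⟨s, hs, h | ⟨a, ha, rfl⟩⟩
      · exact Or.inl ⟨s, hs, h⟩
      · exact Or.inr ⟨a, ⟨s, hs, ha⟩, rfl⟩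
    · rintro (⟨s, hs, h⟩ | ⟨a, ⟨s, hs, ha⟩, rfl⟩)
      · exact ⟨s, hs, Or.inl h⟩
      · exact ⟨s, hs, Or.inr ⟨a, ha, rfl⟩⟩
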